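/- Let V(φ) = k·(exp(√(3/8)φ) − C·exp(−√(3/8)φ))² with k > 0, C > 0, and let α(a,φ) = A·a^(−1/2)·(exp(√(3/8)φ) + C·exp(−√(3/8)φ)) with A ≠ 0, β(a,φ) = −√6·A·a^(−3/2)·(exp(√(3/8)φ) − C·exp(−√(3/8)φ)). Then for all a > 0, φ ∈ ℝ: (3/2)·α·V + β·a·V' + 2·(∂α/∂φ)·V' = 0 and (3/2)·α·V' + β·a·V'' + 3·(∂α/∂φ)·V = 0. -/

import Mathlib

theorem stmt5 (k C A : ℝ) (hk : 0 < k) (hC : 0 < C) (hA : A ≠ 0)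
    (V : ℝ → ℝ)
    (hV : ∀ φ : ℝ, V φ =
      k * (Real.exp (Real.sqrt (3/8) * φ) - C * Real.exp (-Real.sqrt (3/8) * φ)) ^ 2)
    (α β : ℝ → ℝ → ℝ)
    (hα : ∀ a φ : ℝ, α a φ = A * a ^ (-(1:ℝ)/2) *
      (Real.exp (Real.sqrt (3/8) * φ) + C * Real.exp (-Real.sqrt (3/8) * φ)))
    (hβ : ∀ a φ : ℝ, β a φ = -Real.sqrt 6 * A * a ^ (-(3:ℝ)/2) *
      (Real.exp (Real.sqrt (3/8) * φ) - C * Real.exp (-Real.sqrt (3/8) * φ))) :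
    ∀ a : ℝ, 0 < a → ∀ φ : ℝ,
      (3/2) * α a φ * V φ + β a φ * a * deriv V φ
        + 2 * deriv (fun y => α a y) φ * deriv V φ = 0 ∧
      (3/2) * α a φ * deriv V φ + β a φ * a * deriv (deriv V) φ
        + 3 * deriv (fun y => α a y) φ * V φ = 0 := by
  intro a ha φ
  set s := Real.sqrt (3/8) with hsdef
  have ht : Real.sqrt 6 ^ 2 = 6 := Real.sq_sqrt (by norm_num)
  have hs4 : s = Real.sqrt 6 / 4 := by
    rw [hsdef, show (3/8 : ℝ) = 6 / 4 ^ 2 by norm_num, Real.sqrt_div' 6 (by norm_num),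
      Real.sqrt_sq (by norm_num : (0:ℝ) ≤ 4)]
  -- basic derivative facts
  have hE : ∀ x : ℝ, HasDerivAt (fun y => Real.exp (s * y)) (s * Real.exp (s * x)) x := by
    intro x
    simpa [mul_comm, mul_one] using ((hasDerivAt_id x).const_mul s).exp
  have hF : ∀ x : ℝ, HasDerivAt (fun y => Real.exp (-s * y)) (-s * Real.exp (-s * x)) x := by
    intro x
    simpa [mul_comm, mul_one] using ((hasDerivAt_id x).const_mul (-s)).exp
  have hVd : ∀ x : ℝ, HasDerivAt V
      (2 * k * s * ((Real.exp (s * x) - C * Real.exp (-s * x)) *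
        (Real.exp (s * x) + C * Real.exp (-s * x)))) x := by
    intro x
    have hm : HasDerivAt (fun y => Real.exp (s * y) - C * Real.exp (-s * y))
        (s * Real.exp (s * x) - C * (-s * Real.exp (-s * x))) x :=
      (hE x).sub ((hF x).const_mul C)
    have h2 := (hm.pow 2).const_mul k
    have hVeq : V = fun y => k * (Real.exp (s * y) - C * Real.exp (-s * y)) ^ 2 :=
      funext hV
    rw [hVeq]
    refine h2.congr_deriv ?_
    ring
  have hdVfun : deriv V = fun x =>
      2 * k * s * ((Real.exp (s * x) - C * Real.exp (-s * x)) *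
        (Real.exp (s * x) + C * Real.exp (-s * x))) :=
    funext fun x => (hVd x).deriv
  have hdV : deriv V φ = 2 * k * s * ((Real.exp (s * φ) - C * Real.exp (-s * φ)) *
      (Real.exp (s * φ) + C * Real.exp (-s * φ))) := (hVd φ).deriv
  have hddV : deriv (deriv V) φ = 2 * k * s * s *
      ((Real.exp (s * φ) + C * Real.exp (-s * φ)) ^ 2 +
       (Real.exp (s * φ) - C * Real.exp (-s * φ)) ^ 2) := by
    rw [hdVfun]
    have hm : HasDerivAt (fun y => Real.exp (s * y) - C * Real.exp (-s * y))
        (s * Real.exp (s * φ) - C * (-s * Real.exp (-s * φ))) φ :=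
      (hE φ).sub ((hF φ).const_mul C)
    have hp : HasDerivAt (fun y => Real.exp (s * y) + C * Real.exp (-s * y))
        (s * Real.exp (s * φ) + C * (-s * Real.exp (-s * φ))) φ :=
      (hE φ).add ((hF φ).const_mul C)
    have h := ((hm.mul hp).const_mul (2 * k * s)).deriv
    erw [h]
    ring
  have hdα : deriv (fun y => α a y) φ =
      A * a ^ (-(1:ℝ)/2) * (s * Real.exp (s * φ) + C * (-s * Real.exp (-s * φ))) := by
    have hαeq : (fun y => α a y) = fun y =>
        A * a ^ (-(1:ℝ)/2) * (Real.exp (s * y) + C * Real.exp (-s * y)) :=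
      funext (hα a)
    rw [hαeq]
    have hp : HasDerivAt (fun y => Real.exp (s * y) + C * Real.exp (-s * y))
        (s * Real.exp (s * φ) + C * (-s * Real.exp (-s * φ))) φ :=
      (hE φ).add ((hF φ).const_mul C)
    exact (hp.const_mul (A * a ^ (-(1:ℝ)/2))).deriv
  have hpa : a ^ (-(3:ℝ)/2) * a = a ^ (-(1:ℝ)/2) := by
    have h := (Real.rpow_add ha (-(3:ℝ)/2) 1).symm
    rw [Real.rpow_one] at h
    rw [h]
    norm_num
  constructor
  · rw [hV, hα, hβ, hdV, hdα, hs4]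
    linear_combination (A * k *
        (Real.exp (Real.sqrt 6 / 4 * φ) - C * Real.exp (-(Real.sqrt 6 / 4) * φ)) ^ 2 *
        (Real.exp (Real.sqrt 6 / 4 * φ) + C * Real.exp (-(Real.sqrt 6 / 4) * φ))) *
      ((a ^ (-(1:ℝ)/2) / 4 - a ^ (-(3:ℝ)/2) * a / 2) * ht - 3 * hpa)
  · rw [hα, hβ, hV, hdV, hdα, hddV, hs4]
    linear_combination (A * k * (Real.sqrt 6 / 4) *
        (Real.exp (Real.sqrt 6 / 4 * φ) - C * Real.exp (-(Real.sqrt 6 / 4) * φ)) *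
        ((Real.exp (Real.sqrt 6 / 4 * φ) + C * Real.exp (-(Real.sqrt 6 / 4) * φ)) ^ 2 +
         (Real.exp (Real.sqrt 6 / 4 * φ) - C * Real.exp (-(Real.sqrt 6 / 4) * φ)) ^ 2)) *
      (-(a ^ (-(3:ℝ)/2) * a / 2) * ht - 3 * hpa)
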